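/- In KSPM(3), if the k-th avalanche fires column 2j but does not fire column 2j−1 (for j ≥ 1), then it fires exactly the even columns 0, 2, 4, …, 2j among columns ≤ 2j and none of the odd columns 1, 3, …, 2j−1, and the stable configuration π(k−1) has prefix (2,0)^{j−2} (i.e. π(k−1)_{2i} = 2 and π(k−1)_{2i+1} = 0 for 0 ≤ i ≤ j−3). -/

import Mathlib

/-- Effect of firing column `i` in KSPM(D), on height-difference configurations. -/
def step (D : ℕ) (σ : ℕ → ℕ) (i : ℕ) : ℕ → ℕ :=
  fun j =>
    if j = i then σ i - D
    else if j + 1 = i then σ j + (D - 1)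
    else if j = i + D - 1 then σ j + 1
    else σ j

/-- Transition on column `i`: `σ →ᵢ σ'`. -/
def KTrans (D : ℕ) (σ : ℕ → ℕ) (i : ℕ) (σ' : ℕ → ℕ) : Prop :=
  D ≤ σ i ∧ σ' = step D σ i

/-- A strategy (list of fired columns) is legal from `σ`. -/
def Legal (D : ℕ) : (ℕ → ℕ) → List ℕ → Prop
  | _, [] => True
  | σ, i :: s => D ≤ σ i ∧ Legal D (step D σ i) s

/-- Configuration obtained by applying a strategy. -/
def applyStrat (D : ℕ) : (ℕ → ℕ) → List ℕ → (ℕ → ℕ)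
  | σ, [] => σ
  | σ, i :: s => applyStrat D (step D σ i) s

/-- Reachability `σ →* σ'`. -/
def Reaches (D : ℕ) (σ σ' : ℕ → ℕ) : Prop :=
  ∃ s : List ℕ, Legal D σ s ∧ applyStrat D σ s = σ'

/-- A configuration is stable (a fixed point) if no transition is possible. -/
def Stable (D : ℕ) (σ : ℕ → ℕ) : Prop := ∀ i, σ i < D

/-- Initial configuration: `N` grains stacked on column 0 (height differences `(N,0,0,…)`). -/
def initConf (N : ℕ) : ℕ → ℕ := fun j => if j = 0 then N else 0

/-- `τ = π(N)`: the stable configuration reachable from `N` stacked grains. -/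
def IsPi (D N : ℕ) (τ : ℕ → ℕ) : Prop := Reaches D (initConf N) τ ∧ Stable D τ

/-- `σ^{↓0}`: add one grain on column 0. -/
def addGrain (σ : ℕ → ℕ) : ℕ → ℕ := Function.update σ 0 (σ 0 + 1)

/-- `s` is the leftmost (lexicographically minimal) strategy from `τ^{↓0}` to `τ'`. -/
def IsAvalancheFor (D : ℕ) (τ τ' : ℕ → ℕ) (s : List ℕ) : Prop :=
  Legal D (addGrain τ) s ∧ applyStrat D (addGrain τ) s = τ' ∧
    ∀ s' : List ℕ, Legal D (addGrain τ) s' → applyStrat D (addGrain τ) s' = τ' →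
      ¬ List.Lex (· < ·) s' s

/-- `s` is the `k`-th avalanche: leftmost strategy from `π(k-1)^{↓0}` to `π(k)`. -/
def IsAvalanche (D k : ℕ) (s : List ℕ) : Prop :=
  ∃ τ τ' : ℕ → ℕ, IsPi D (k - 1) τ ∧ IsPi D k τ' ∧ IsAvalancheFor D τ τ' s

/-- Position `t` (0-indexed) of strategy `s` is a peak: it exceeds all earlier fired columns. -/
def IsPeak (s : List ℕ) (t : ℕ) : Prop :=
  t < s.length ∧ ∀ t' < t, s.getD t' 0 < s.getD t 0

/-- Column `p` is a peak of `s`. -/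
def IsPeakVal (s : List ℕ) (p : ℕ) : Prop :=
  ∃ t : ℕ, IsPeak s t ∧ s.getD t 0 = p

lemma legal_take {D : ℕ} {σ : ℕ → ℕ} {s : List ℕ} (h : Legal D σ s) (t : ℕ) :
    Legal D σ (s.take t) := by
  induction s generalizing σ t with
  | nil => simp [Legal]
  | cons i q ih =>
    cases t with
    | zero => simp [Legal]
    | succ t => exact ⟨h.1, ih h.2 t⟩

lemma legal_fire {D : ℕ} {σ : ℕ → ℕ} {s : List ℕ} (h : Legal D σ s) (t : ℕ) (ht : t < s.length) :
    D ≤ applyStrat D σ (s.take t) (s.getD t 0) := by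
  induction s generalizing σ t with
  | nil => simp at ht
  | cons i q ih =>
    cases t with
    | zero => simpa [applyStrat] using h.1
    | succ t => simpa [applyStrat] using ih h.2 t (by simpa using ht)

lemma val_formula {σ : ℕ → ℕ} {p : List ℕ} (h : Legal 3 σ p) (c : ℕ) :
    applyStrat 3 σ p c + 3 * p.count c =
      σ c + 2 * p.count (c+1) + (if 2 ≤ c then p.count (c-2) else 0) := by
  induction p generalizing σ with
  | nil => simp [applyStrat]
  | cons i q ih =>
    obtain ⟨hi, hq⟩ := h
    have key := ih hq
    have hs : step 3 σ i c = if c = i then σ c - 3 else if c + 1 = i then σ c + 2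
        else if c = i + 2 then σ c + 1 else σ c := by
      simp only [step]
      rcases eq_or_ne c i with h1 | h1 <;>
        rcases eq_or_ne (c+1) i with h2 | h2 <;>
          rcases eq_or_ne c (i+2) with h3 | h3 <;>
            simp [h1, h2, h3] <;> omega
    rw [hs] at key
    simp only [applyStrat, List.count_cons, beq_iff_eq]
    rcases eq_or_ne c i with h1 | h1
    · have hi' : 3 ≤ σ c := by rw [h1]; exact hi
      rw [if_pos h1] at key
      by_cases hg : 2 ≤ c
      · rw [if_pos hg] at key ⊢
        rw [if_pos h1.symm, if_neg (by omega : i ≠ c + 1), if_neg (by omega : i ≠ c - 2)]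
        omega
      · rw [if_neg hg] at key ⊢
        rw [if_pos h1.symm, if_neg (by omega : i ≠ c + 1)]
        omega
    · rw [if_neg h1] at key
      rcases eq_or_ne (c+1) i with h2 | h2
      · rw [if_pos h2] at key
        by_cases hg : 2 ≤ c
        · rw [if_pos hg] at key ⊢
          rw [if_neg (by omega : i ≠ c), if_pos h2.symm, if_neg (by omega : i ≠ c - 2)]
          omega
        · rw [if_neg hg] at key ⊢
          rw [if_neg (by omega : i ≠ c), if_pos h2.symm]
          omega
      · rw [if_neg h2] at key
        rcases eq_or_ne c (i+2) with h3 | h3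
        · have hg : 2 ≤ c := by omega
          rw [if_pos h3, if_pos hg] at key
          rw [if_pos hg, if_neg (by omega : i ≠ c), if_neg (by omega : i ≠ c + 1),
            if_pos (by omega : i = c - 2)]
          omega
        · rw [if_neg h3] at key
          by_cases hg : 2 ≤ c
          · rw [if_pos hg] at key ⊢
            rw [if_neg (by omega : i ≠ c), if_neg (by omega : i ≠ c + 1),
              if_neg (by omega : i ≠ c - 2)]
            omega
          · rw [if_neg hg] at key ⊢
            rw [if_neg (by omega : i ≠ c), if_neg (by omega : i ≠ c + 1)]
            omega

/-- In KSPM(3): if the avalanche fires 2j but not 2j-1, then among columns ≤ 2j exactly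
the even ones are fired, and π(k-1) starts with the prefix (2,0)^{j-2}. -/
theorem kspm3_alternating_prefix (k j : ℕ) (hk : 1 ≤ k) (hj : 1 ≤ j)
    (s : List ℕ) (τ τ' : ℕ → ℕ) (hτ : IsPi 3 (k - 1) τ) (hτ' : IsPi 3 k τ')
    (hav : IsAvalancheFor 3 τ τ' s)
    (h2j : 2 * j ∈ s) (h2j1 : 2 * j - 1 ∉ s) :
    (∀ i : ℕ, i ≤ j → 2 * i ∈ s) ∧
      (∀ i : ℕ, i < j → 2 * i + 1 ∉ s) ∧
      (∀ i : ℕ, i + 3 ≤ j → τ (2 * i) = 2 ∧ τ (2 * i + 1) = 0) := by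
  have hstτ : ∀ i, τ i < 3 := hτ.2
  have hstτ' : ∀ i, τ' i < 3 := hτ'.2
  obtain ⟨hleg, happ, -⟩ := hav
  set σ := addGrain τ with hσdef
  have hσ0 : σ 0 = τ 0 + 1 := by simp [hσdef, addGrain]
  have hσpos : ∀ c, c ≠ 0 → σ c = τ c := by
    intro c hc; simp [hσdef, addGrain, Function.update_of_ne hc]
  have hσle : ∀ c, σ c ≤ 3 := by
    intro c
    rcases eq_or_ne c 0 with h | h
    · rw [h, hσ0]; have := hstτ 0; omega
    · rw [hσpos c h]; have := hstτ c; omega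
  have hσle1 : ∀ c, c ≠ 0 → σ c ≤ 2 := by
    intro c h; rw [hσpos c h]; have := hstτ c; omega
  -- firing condition in count form
  have fire : ∀ t, t < s.length → ∀ c, s.getD t 0 = c →
      3 + 3 * ((s.take t).count c) ≤ σ c + 2 * ((s.take t).count (c+1)) +
        (if 2 ≤ c then (s.take t).count (c-2) else 0) := by
    intro t ht c hc
    have h1 := legal_fire hleg t ht
    have h2 := val_formula (legal_take hleg t) c
    rw [hc] at h1
    omega
  -- prefixes are duplicate-free
  have ndtake : ∀ t, (s.take t).Nodup := by
    intro t
    induction t with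
    | zero => simp
    | succ t ih =>
      rcases le_or_gt s.length t with hlen | hlen
      · have he : s.take (t+1) = s.take t := by
          rw [List.take_of_length_le (by omega), List.take_of_length_le hlen]
        rw [he]; exact ih
      · rw [List.take_succ, List.getElem?_eq_getElem hlen]
        simp only [Option.toList_some]
        rw [List.nodup_append]
        refine ⟨ih, List.nodup_singleton _, ?_⟩
        intro x hx y hx1 hxy
        simp only [List.mem_singleton] at hx1
        subst hx1
        subst hxy
        have hmem : 1 ≤ (s.take t).count s[t] := List.count_pos_iff.2 hx
        have hc1 : (s.take t).count (s[t]+1) ≤ 1 := List.nodup_iff_count_le_one.1 ih _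
        have hc2 : (s.take t).count (s[t]-2) ≤ 1 := List.nodup_iff_count_le_one.1 ih _
        have hf := fire t hlen s[t] (List.getD_eq_getElem s 0 hlen)
        have hb : (if 2 ≤ s[t] then (s.take t).count (s[t]-2) else 0) ≤ 1 := by
          split
          · exact hc2
          · omega
        rcases eq_or_ne s[t] 0 with h0 | h0
        · rw [h0] at hf
          have := hσle 0
          simp only [show ¬ (2 ≤ 0) by omega, if_false] at hf
          rw [h0] at hmem hc1
          omega
        · have := hσle1 s[t] h0
          omega
  have hnd : s.Nodup := by
    have := ndtake s.length
    rwa [List.take_of_length_le (le_refl _)] at this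
  have notbefore : ∀ t, t < s.length → s.getD t 0 ∉ s.take t := by
    intro t ht hmem
    have h1 := ndtake (t+1)
    rw [List.take_succ, List.getElem?_eq_getElem ht] at h1
    simp only [Option.toList_some] at h1
    rw [List.nodup_append] at h1
    exact h1.2.2 _ (by rwa [List.getD_eq_getElem s 0 ht] at hmem) _ (List.mem_singleton.2 rfl) rfl
  have tsub : ∀ n t : ℕ, n ≤ t → s.take n ⊆ s.take t := by
    intro n t h x hx
    have he : s.take n = (s.take t).take n := by rw [List.take_take, min_eq_left h]
    rw [he] at hx
    exact List.take_subset _ _ hx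
  have memtake : ∀ t x, x ∈ s.take t → ∃ n, n < t ∧ n < s.length ∧ s.getD n 0 = x := by
    intro t x hx
    obtain ⟨n, hn, hx⟩ := List.mem_iff_getElem.1 hx
    have hn2 : n < s.length := lt_of_lt_of_le hn (by simp [List.length_take])
    have hn1 : n < t := lt_of_lt_of_le hn (by simp [List.length_take])
    refine ⟨n, hn1, hn2, ?_⟩
    rw [List.getD_eq_getElem s 0 hn2, ← hx, List.getElem_take]
  -- Lemma B : a column beyond a fires only after a or a-1 has fired
  have lemB : ∀ t, t < s.length → ∀ c a, s.getD t 0 = c → a + 1 ≤ c →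
      a ∈ s.take t ∨ a - 1 ∈ s.take t := by
    intro t
    induction t using Nat.strong_induction_on with
    | _ t IH =>
      intro ht c a hc ha
      have hf := fire t ht c hc
      have h0 : (s.take t).count c = 0 := List.count_eq_zero.2 (by
        intro hmem; exact notbefore t ht (by rwa [hc]))
      have hσc : σ c ≤ 2 := hσle1 c (by omega)
      have hcases : 1 ≤ (s.take t).count (c+1) ∨ (2 ≤ c ∧ 1 ≤ (s.take t).count (c-2)) := by
        by_cases hg : 2 ≤ c
        · rw [if_pos hg] at hf; omega
        · rw [if_neg hg] at hf; omega
      rcases hcases with h | ⟨hg, h⟩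
      · have hmem : c + 1 ∈ s.take t := List.count_pos_iff.1 (by omega)
        obtain ⟨n, hn, hn2, hgn⟩ := memtake t _ hmem
        rcases IH n hn hn2 (c+1) a hgn (by omega) with h' | h'
        · exact Or.inl (tsub n t (le_of_lt hn) h')
        · exact Or.inr (tsub n t (le_of_lt hn) h')
      · have hmem : c - 2 ∈ s.take t := List.count_pos_iff.1 (by omega)
        rcases (by omega : c - 2 = a ∨ c - 2 = a - 1 ∨ a + 1 ≤ c - 2) with h' | h' | h'
        · exact Or.inl (h' ▸ hmem)
        · exact Or.inr (h' ▸ hmem)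
        · obtain ⟨n, hn, hn2, hgn⟩ := memtake t _ hmem
          rcases IH n hn hn2 (c-2) a hgn h' with h'' | h''
          · exact Or.inl (tsub n t (le_of_lt hn) h'')
          · exact Or.inr (tsub n t (le_of_lt hn) h'')
  -- main descending step
  have stepdown : ∀ m, 1 ≤ m → 2*m ∈ s → (2*m-1) ∉ s →
      τ (2*m) = 2 ∧ (2*m-2) ∈ s ∧ (2 ≤ m → (2*m-3) ∉ s) := by
    intro m hm hmem hnot
    obtain ⟨t, ht, hteq⟩ := List.mem_iff_getElem.1 hmem
    have hget : s.getD t 0 = 2*m := by rw [List.getD_eq_getElem s 0 ht, hteq]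
    have h2mn : (s.take t).count (2*m) = 0 :=
      List.count_eq_zero.2 (by intro hmem'; exact notbefore t ht (by rwa [hget]))
    have h2m1n : (s.take t).count (2*m+1) = 0 := by
      apply List.count_eq_zero.2
      intro hmem'
      obtain ⟨n, hn, hn2, hgn⟩ := memtake t _ hmem'
      rcases lemB n hn2 (2*m+1) (2*m) hgn (by omega) with h' | h'
      · have : 2*m ∈ s.take t := tsub n t (le_of_lt hn) h'
        exact notbefore t ht (by rw [hget]; exact this)
      · have : 2*m - 1 ∈ s := List.take_subset _ _ h'
        exact hnot this
    have hf := fire t ht (2*m) hget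
    rw [if_pos (by omega : 2 ≤ 2*m)] at hf
    have hcle : (s.take t).count (2*m-2) ≤ 1 := List.nodup_iff_count_le_one.1 (ndtake t) _
    have hσm : σ (2*m) = τ (2*m) := hσpos _ (by omega)
    have hτm : τ (2*m) < 3 := hstτ _
    have hcge : 1 ≤ (s.take t).count (2*m-2) := by omega
    have hmemt : 2*m-2 ∈ s.take t := List.count_pos_iff.1 (by omega)
    refine ⟨by omega, List.take_subset _ _ hmemt, ?_⟩
    intro hm2 hmem3
    have final := val_formula hleg (2*m-1)
    rw [happ] at final
    rw [show 2*m-1+1 = 2*m by omega, show 2*m-1-2 = 2*m-3 by omega,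
      if_pos (by omega : 2 ≤ 2*m-1)] at final
    have hc0 : s.count (2*m-1) = 0 := List.count_eq_zero.2 hnot
    have hc1 : 1 ≤ s.count (2*m) := List.count_pos_iff.2 hmem
    have hc3 : 1 ≤ s.count (2*m-3) := List.count_pos_iff.2 hmem3
    have := hstτ' (2*m-1)
    omega
  -- descend from j
  have chain : ∀ d m, m + d = j → 1 ≤ m → 2*m ∈ s ∧ (2*m-1) ∉ s := by
    intro d
    induction d with
    | zero =>
      intro m hmd _
      have : m = j := by omega
      subst this
      exact ⟨h2j, h2j1⟩
    | succ d ih =>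
      intro m hmd hm
      have hprev := ih (m+1) (by omega) (by omega)
      have hsd := stepdown (m+1) (by omega) hprev.1 hprev.2
      constructor
      · have := hsd.2.1
        rwa [show 2*(m+1)-2 = 2*m by omega] at this
      · have := hsd.2.2 (by omega)
        rwa [show 2*(m+1)-3 = 2*m-1 by omega] at this
  have goal1 : ∀ i : ℕ, i ≤ j → 2 * i ∈ s := by
    intro i hi
    rcases eq_or_ne i 0 with h0 | h0
    · subst h0
      have hc := chain (j-1) 1 (by omega) (by omega)
      have := (stepdown 1 (by omega) hc.1 hc.2).2.1
      simpa using this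
    · exact (chain (j-i) i (by omega) (by omega)).1
  have goal2 : ∀ i : ℕ, i < j → 2 * i + 1 ∉ s := by
    intro i hi
    have := (chain (j-(i+1)) (i+1) (by omega) (by omega)).2
    rwa [show 2*(i+1)-1 = 2*i+1 by omega] at this
  refine ⟨goal1, goal2, ?_⟩
  intro i hi
  constructor
  · rcases eq_or_ne i 0 with h0 | h0
    · subst h0
      -- τ 0 = 2
      obtain ⟨t, ht, hteq⟩ := List.mem_iff_getElem.1 (goal1 0 (by omega))
      have hget : s.getD t 0 = 0 := by rw [List.getD_eq_getElem s 0 ht, hteq]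
      have hf := fire t ht 0 hget
      rw [if_neg (by omega : ¬ 2 ≤ 0)] at hf
      have hc1 : (s.take t).count 1 = 0 := by
        apply List.count_eq_zero.2
        intro hmem
        exact goal2 0 (by omega) (by simpa using List.take_subset _ _ hmem)
      have := hstτ 0
      simp only [hc1] at hf
      show τ 0 = 2
      omega
    · have hc := chain (j-i) i (by omega) (by omega)
      exact (stepdown i (by omega) hc.1 hc.2).1
  · -- τ (2i+1) = 0
    have final := val_formula hleg (2*i+1)
    rw [happ] at final
    have hc0 : s.count (2*i+1) = 0 := List.count_eq_zero.2 (goal2 i (by omega))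
    have hc2 : 1 ≤ s.count (2*i+1+1) := by
      rw [show 2*i+1+1 = 2*(i+1) by ring]
      exact List.count_pos_iff.2 (goal1 (i+1) (by omega))
    have hσi : σ (2*i+1) = τ (2*i+1) := hσpos _ (by omega)
    have := hstτ' (2*i+1)
    split_ifs at final <;> omega
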